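/- With the same setup, for the full index range one has ∑_{i=1}^{h} (d_i/d_{i+1} - 1)·r_i = r_h·d_h - m_h, and consequently the Milnor number μ = ∑_{i=1}^{h} (d_i/d_{i+1} - 1)·r_i - r_0 + 1 equals r_h·d_h - m_h - r_0 + 1. -/
import Mathlib


/-- With the characteristic-sequence setup,
`∑_{i=1}^{h} (d i / d (i+1) - 1) * r i = r h * d h - m h`, and consequently the
Milnor number `μ = ∑_{i=1}^{h} (d i / d (i+1) - 1) * r i - r 0 + 1` equals
`r h * d h - m h - r 0 + 1` (stated in `ℤ` to allow subtraction). -/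
theorem stmt1 (h : ℕ) (r d m : ℕ → ℕ) (hh : 1 ≤ h)
    (hrpos : ∀ k, k ≤ h → 0 < r k)
    (hrmono : ∀ k, k ≤ h - 1 → r k < r (k + 1))
    (hd1 : d 1 = r 0)
    (hd : ∀ k, 1 ≤ k → k ≤ h → d (k + 1) = Nat.gcd (d k) (r k))
    (hdh1 : d (h + 1) = 1)
    (hm1 : m 1 = r 1)
    (hm : ∀ k, 1 ≤ k → k ≤ h - 1 →
      r (k + 1) + m k = r k * (d k / d (k + 1)) + m (k + 1)) :
    (∑ i ∈ Finset.Icc 1 h, (((d i / d (i + 1) : ℕ) : ℤ) - 1) * (r i : ℤ))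
        = (r h : ℤ) * (d h : ℤ) - (m h : ℤ) ∧
    (∑ i ∈ Finset.Icc 1 h, (((d i / d (i + 1) : ℕ) : ℤ) - 1) * (r i : ℤ)) - (r 0 : ℤ) + 1
        = (r h : ℤ) * (d h : ℤ) - (m h : ℤ) - (r 0 : ℤ) + 1 := by
  have key : ∀ k, 1 ≤ k → k ≤ h →
      (∑ i ∈ Finset.Icc 1 k, (((d i / d (i + 1) : ℕ) : ℤ) - 1) * (r i : ℤ))
        = (r k : ℤ) * ((d k / d (k + 1) : ℕ) : ℤ) - (m k : ℤ) := by
    intro k hk1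
    induction k, hk1 using Nat.le_induction with
    | base =>
      intro _
      simp [hm1]
      ring
    | succ n hn ih =>
      intro hle
      rw [Finset.sum_Icc_succ_top (by omega), ih (by omega)]
      have h2 := hm n hn (by omega)
      have h3 : (r (n + 1) : ℤ) + (m n : ℤ)
          = (r n : ℤ) * ((d n / d (n + 1) : ℕ) : ℤ) + (m (n + 1) : ℤ) := by
        exact_mod_cast h2
      ring_nf
      ring_nf at h3
      linarith
  have k1 := key h hh le_rfl
  rw [hdh1] at k1
  simp only [Nat.div_one] at k1
  exact ⟨k1, by rw [k1]⟩
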